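/- If a nonnegative random variable X is InvSub, i.e. x ↦ 1 - F_X(1/x) is subadditive on (0,∞), and X is not almost surely constant, then E[X] = ∞. -/

import Mathlib

open MeasureTheory Set
open scoped ENNReal NNReal

/-- If a nonnegative random variable (with distribution `μ` on `ℝ`,
`F 0 = 0`) is InvSub, i.e. `x ↦ 1 - F (1/x)` is subadditive on `(0,∞)`, and is not
almost surely constant, then its mean is infinite. -/
theorem stmt11 (μ : Measure ℝ) [IsProbabilityMeasure μ]
    (F : ℝ → ℝ) (hF : ∀ x, F x = (μ (Iic x)).toReal) (hF0 : F 0 = 0)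
    (hsub : ∀ x y : ℝ, 0 < x → 0 < y →
      1 - F (1 / (x + y)) ≤ (1 - F (1 / x)) + (1 - F (1 / y)))
    (hnc : ¬ ∃ c : ℝ, μ {c} = 1) :
    ∫⁻ x, ENNReal.ofReal x ∂μ = ⊤ := by
  -- `μ (Iic 0) = 0` since `F 0 = 0` and the measure is finite
  have hμ0 : μ (Iic (0:ℝ)) = 0 := by
    have h1 := hF 0
    rw [hF0] at h1
    rcases (ENNReal.toReal_eq_zero_iff _).mp h1.symm with h | h
    · exact h
    · exact absurd h (measure_ne_top μ _)
  -- monotonicity and boundedness of `F`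
  have hFmono : Monotone F := fun a b hab => by
    rw [hF a, hF b]
    exact ENNReal.toReal_mono (measure_ne_top μ _) (measure_mono (Iic_subset_Iic.mpr hab))
  have hFle1 : ∀ x, F x ≤ 1 := fun x => by
    rw [hF x]
    have := ENNReal.toReal_mono ENNReal.one_ne_top (prob_le_one (μ := μ) (s := Iic x))
    simpa using this
  -- find `ε > 0` with `F ε ≤ 1/2`
  obtain ⟨ε, hε, hFε⟩ : ∃ ε : ℝ, 0 < ε ∧ F ε ≤ 1/2 := by
    have hs : ∀ n : ℕ, NullMeasurableSet (Iic ((n:ℝ)+1)⁻¹) μ :=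
      fun n => (measurableSet_Iic).nullMeasurableSet
    have hm : Antitone (fun n : ℕ => Iic ((n:ℝ)+1)⁻¹) := by
      intro a b hab
      apply Iic_subset_Iic.mpr
      have : (a:ℝ)+1 ≤ (b:ℝ)+1 := by exact_mod_cast by omega
      exact inv_anti₀ (by positivity) this
    have hint : (⋂ n : ℕ, Iic ((n:ℝ)+1)⁻¹) = Iic (0:ℝ) := by
      ext x
      simp only [mem_iInter, mem_Iic]
      constructor
      · intro hx
        by_contra hx0
        push_neg at hx0
        obtain ⟨n, hn⟩ := exists_nat_gt x⁻¹
        have h1 : x⁻¹ < (n:ℝ)+1 := hn.trans (by linarith)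
        have h2 := inv_strictAnti₀ (by positivity : (0:ℝ) < x⁻¹) h1
        rw [inv_inv] at h2
        linarith [hx n]
      · intro hx n
        exact hx.trans (by positivity)
    have htd := tendsto_measure_iInter_atTop (μ := μ) hs hm ⟨0, measure_ne_top μ _⟩
    rw [hint, hμ0] at htd
    have h2 : (0:ℝ≥0∞) < ENNReal.ofReal (1/2) := by norm_num
    obtain ⟨N, hN⟩ := (htd.eventually_lt_const h2).exists
    refine ⟨((N:ℝ)+1)⁻¹, by positivity, ?_⟩
    rw [hF]
    exact ENNReal.toReal_le_of_le_ofReal (by norm_num) hN.le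
  -- the key subadditivity-based pointwise lower bound on the tail
  have hlow : ∀ s : ℝ, 0 < s → s ≤ ε⁻¹ → s * (ε/4) ≤ 1 - F (1/s) := by
    have key : ∀ n : ℕ, ∀ s : ℝ, 0 < s →
        1 - F (1 / (((n:ℝ)+1) * s)) ≤ ((n:ℝ)+1) * (1 - F (1/s)) := by
      intro n
      induction n with
      | zero => intro s hs; simp
      | succ n ih =>
        intro s hs
        have h1 := hsub (((n:ℝ)+1)*s) s (by positivity) hs
        have h2 := ih s hs
        push_cast
        have he2 : ((n:ℝ)+1+1)*s = ((n:ℝ)+1)*s + s := by ring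
        rw [he2]
        linarith
    intro s hs hsle
    set y : ℝ := ε⁻¹ with hy
    have hypos : 0 < y := by positivity
    set k : ℕ := ⌈y/s⌉₊ with hk
    have hys1 : 1 ≤ y/s := (one_le_div hs).mpr hsle
    have hk1 : 1 ≤ k := Nat.one_le_ceil_iff.mpr (by positivity)
    have hkk : y ≤ (k:ℝ) * s := by
      have := Nat.le_ceil (y/s)
      calc y = (y/s) * s := by field_simp
      _ ≤ (k:ℝ) * s := by nlinarith
    have hkle : (k:ℝ) ≤ 2 * (y/s) := by
      have h1 : (k:ℝ) < y/s + 1 := Nat.ceil_lt_add_one (by positivity)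
      linarith
    have hmono : 1 - F (1/y) ≤ 1 - F (1/((k:ℝ)*s)) := by
      have : (1:ℝ)/((k:ℝ)*s) ≤ 1/y := one_div_le_one_div_of_le hypos hkk
      linarith [hFmono this]
    have hky := key (k-1) s hs
    have hcast : ((k-1:ℕ):ℝ) + 1 = (k:ℝ) := by
      have : (1:ℕ) ≤ k := hk1
      push_cast [Nat.cast_sub this]
      ring
    rw [hcast] at hky
    have hFy : 1/2 ≤ 1 - F (1/y) := by
      have : (1:ℝ)/y = ε := by rw [hy]; field_simp
      rw [this]; linarith
    have hpos : 0 ≤ 1 - F (1/s) := by linarith [hFle1 (1/s)]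
    have hkpos : (0:ℝ) < k := by exact_mod_cast hk1
    have h5 : 1/2 ≤ (k:ℝ) * (1 - F (1/s)) := by linarith
    have h6 : 1/2 ≤ 2*(y/s) * (1 - F (1/s)) := by nlinarith
    have h8 : s*ε/2 ≤ 2*(1 - F (1/s)) := by
      have h9 := mul_le_mul_of_nonneg_left h6 (mul_pos hs hε).le
      calc s*ε/2 = (s*ε)*(1/2) := by ring
      _ ≤ (s*ε)*(2*(y/s)*(1 - F (1/s))) := h9
      _ = 2*(1 - F (1/s)) := by rw [hy]; field_simp
    linarith
  -- translate into a lower bound on `μ (Ioi t)`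
  have hb : ∀ t : ℝ, ε ≤ t → 0 < t → ENNReal.ofReal ((ε/4) * t⁻¹) ≤ μ (Ioi t) := by
    intro t hεt ht
    have hs : (0:ℝ) < t⁻¹ := by positivity
    have hsle : t⁻¹ ≤ ε⁻¹ := inv_anti₀ hε hεt
    have := hlow t⁻¹ hs hsle
    rw [one_div, inv_inv] at this
    have htoReal : (μ (Ioi t)).toReal = 1 - F t := by
      have hc : μ (Ioi t) = 1 - μ (Iic t) := by
        rw [← compl_Iic]
        exact prob_compl_eq_one_sub measurableSet_Iic
      rw [hc, ENNReal.toReal_sub_of_le prob_le_one ENNReal.one_ne_top,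
        ENNReal.toReal_one, ← hF t]
    apply ENNReal.ofReal_le_of_le_toReal
    rw [htoReal]
    linarith
  -- layer cake and divergence of `∫ 1/t`
  have hnn : 0 ≤ᵐ[μ] (fun x : ℝ => x) := by
    rw [Filter.EventuallyLE, ae_iff]
    apply measure_mono_null _ hμ0
    intro x hx
    simp only [Pi.zero_apply, mem_setOf_eq, not_le] at hx
    exact mem_Iic.mpr hx.le
  rw [lintegral_eq_lintegral_meas_lt μ hnn aemeasurable_id]
  have hset : ∀ t : ℝ, {a : ℝ | t < a} = Ioi t := fun t => rfl
  simp only [hset]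
  set T : ℝ := max ε 1 with hT
  have hT0 : (0:ℝ) < T := lt_of_lt_of_le one_pos (le_max_right _ _)
  have hTε : ε ≤ T := le_max_left _ _
  have hInv : ∫⁻ t in Ioi T, ENNReal.ofReal t⁻¹ = ⊤ := by
    by_contra hfin
    have hint : IntegrableOn (fun t : ℝ => t⁻¹) (Ioi T) := by
      constructor
      · exact measurable_inv.aestronglyMeasurable
      · refine lt_top_iff_ne_top.2 ?_
        have hcg : ∫⁻ t in Ioi T, (‖t⁻¹‖₊ : ℝ≥0∞) = ∫⁻ t in Ioi T, ENNReal.ofReal t⁻¹ :=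
          setLIntegral_congr_fun measurableSet_Ioi (fun t ht =>
            Real.enorm_eq_ofReal (inv_nonneg.mpr (hT0.trans ht).le))
        show (∫⁻ t in Ioi T, (‖t⁻¹‖₊ : ℝ≥0∞)) ≠ ⊤
        rw [hcg]
        exact hfin
    have hint2 : IntegrableOn (fun x : ℝ => x ^ (-1:ℝ)) (Ioi T) :=
      hint.congr_fun (fun x hx => (Real.rpow_neg_one x).symm) measurableSet_Ioi
    rw [integrableOn_Ioi_rpow_iff hT0] at hint2
    linarith
  have hmeas : Measurable (fun t : ℝ => μ (Ioi t)) := by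
    apply Antitone.measurable
    intro a b hab
    exact measure_mono (Ioi_subset_Ioi hab)
  refine top_unique ?_
  calc (⊤ : ℝ≥0∞) = ENNReal.ofReal (ε/4) * ∫⁻ t in Ioi T, ENNReal.ofReal t⁻¹ := by
        rw [hInv, ENNReal.mul_top (by simp [ENNReal.ofReal_eq_zero]; positivity)]
  _ = ∫⁻ t in Ioi T, ENNReal.ofReal ((ε/4) * t⁻¹) := by
        simp_rw [ENNReal.ofReal_mul (by positivity : (0:ℝ) ≤ ε/4)]
        rw [lintegral_const_mul' _ _ ENNReal.ofReal_ne_top]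
  _ ≤ ∫⁻ t in Ioi T, μ (Ioi t) :=
        setLIntegral_mono hmeas (fun t ht => hb t (hTε.trans (le_of_lt ht)) (hT0.trans ht))
  _ ≤ ∫⁻ t in Ioi 0, μ (Ioi t) := lintegral_mono_set (Ioi_subset_Ioi hT0.le)
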